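/- The substitution v(t) = t^{-1/2}(1 + u(x)) with x = (4/7) t^{7/4} transforms the equation 2v″(t) − t + 1/v(t)² = 0 into u″(x) = u + (1/(7x)) u′ − (12/(49x²)) u − (3u² + 2u³)/(2(1+u)²) − 12/(49x²). -/

import Mathlib

private lemma pow17 {s : ℝ} (hs : 0 < s) (n : ℕ) :
    s ^ ((n : ℝ) / 7) = (s ^ ((1:ℝ)/7)) ^ n := by
  rw [← Real.rpow_natCast (s ^ ((1:ℝ)/7)) n, ← Real.rpow_mul hs.le]
  ring_nf

private lemma pow17n {s : ℝ} (hs : 0 < s) (n : ℕ) :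
    s ^ (-(n : ℝ) / 7) = ((s ^ ((1:ℝ)/7)) ^ n)⁻¹ := by
  rw [neg_div, Real.rpow_neg hs.le, pow17 hs n]

private lemma hds (x : ℝ) : HasDerivAt (fun z : ℝ => 7 * z / 4) (7/4) x := by
  simpa using ((hasDerivAt_id x).const_mul 7).div_const 4

private lemma hdp (r : ℝ) {x : ℝ} (hx : 0 < x) :
    HasDerivAt (fun z : ℝ => (7*z/4) ^ r) (r * (7*x/4)^(r-1) * (7/4)) x := by
  have h1 : HasDerivAt (fun y : ℝ => y ^ r) (r * (7*x/4)^(r-1)) (7*x/4) :=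
    Real.hasDerivAt_rpow_const (Or.inl (by positivity))
  exact h1.comp x (hds x)

set_option maxHeartbeats 1600000 in
theorem normalizing_substitution (v u : ℝ → ℝ)
    (hv1 : ∀ t : ℝ, 0 < t → DifferentiableAt ℝ v t)
    (hv2 : ∀ t : ℝ, 0 < t → DifferentiableAt ℝ (deriv v) t)
    (hvne : ∀ t : ℝ, 0 < t → v t ≠ 0)
    (hveq : ∀ t : ℝ, 0 < t → 2 * deriv (deriv v) t - t + 1 / (v t) ^ 2 = 0)
    (hu : ∀ x : ℝ, 0 < x →
      u x = ((7 * x / 4) ^ ((4 : ℝ) / 7)) ^ ((1 : ℝ) / 2) * v ((7 * x / 4) ^ ((4 : ℝ) / 7)) - 1)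
    (hune : ∀ x : ℝ, 0 < x → 1 + u x ≠ 0) :
    ∀ x : ℝ, 0 < x →
      deriv (deriv u) x = u x + 1 / (7 * x) * deriv u x - 12 / (49 * x ^ 2) * u x
        - (3 * u x ^ 2 + 2 * u x ^ 3) / (2 * (1 + u x) ^ 2) - 12 / (49 * x ^ 2) := by
  -- u rewritten with single rpow
  have huz : ∀ z : ℝ, 0 < z →
      u z = (7*z/4)^((2:ℝ)/7) * v ((7*z/4)^((4:ℝ)/7)) - 1 := by
    intro z hz
    rw [hu z hz, ← Real.rpow_mul (by linarith : (0:ℝ) ≤ 7*z/4)]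
    norm_num
  set D : ℝ → ℝ := fun y => (1/2) * (7*y/4)^(-(5:ℝ)/7) * v ((7*y/4)^((4:ℝ)/7))
      + (7*y/4)^(-(1:ℝ)/7) * deriv v ((7*y/4)^((4:ℝ)/7)) with hD
  have hDu : ∀ y : ℝ, 0 < y → HasDerivAt u (D y) y := by
    intro y hy
    have hs : (0:ℝ) < 7*y/4 := by linarith
    have ht : (0:ℝ) < (7*y/4)^((4:ℝ)/7) := Real.rpow_pos_of_pos hs _
    have hw : HasDerivAt (fun z : ℝ => (7*z/4)^((4:ℝ)/7))
        ((4:ℝ)/7 * (7*y/4)^((4:ℝ)/7-1) * (7/4)) y := hdp _ hy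
    have h1 : HasDerivAt (fun z : ℝ => (7*z/4)^((2:ℝ)/7))
        ((2:ℝ)/7 * (7*y/4)^((2:ℝ)/7-1) * (7/4)) y := hdp _ hy
    have h2 : HasDerivAt (fun z : ℝ => v ((7*z/4)^((4:ℝ)/7)))
        (deriv v ((7*y/4)^((4:ℝ)/7)) * ((4:ℝ)/7 * (7*y/4)^((4:ℝ)/7-1) * (7/4))) y :=
      ((hv1 _ ht).hasDerivAt).comp y hw
    have hU : HasDerivAt (fun z : ℝ => (7*z/4)^((2:ℝ)/7) * v ((7*z/4)^((4:ℝ)/7)) - 1)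
        ((2:ℝ)/7 * (7*y/4)^((2:ℝ)/7-1) * (7/4) * v ((7*y/4)^((4:ℝ)/7))
          + (7*y/4)^((2:ℝ)/7) * (deriv v ((7*y/4)^((4:ℝ)/7)) * ((4:ℝ)/7 * (7*y/4)^((4:ℝ)/7-1) * (7/4)))) y :=
      (h1.mul h2).sub_const 1
    have heq : u =ᶠ[nhds y] (fun z : ℝ => (7*z/4)^((2:ℝ)/7) * v ((7*z/4)^((4:ℝ)/7)) - 1) :=
      (eventually_gt_nhds hy).mono fun z hz => huz z hz
    have hval : ((2:ℝ)/7 * (7*y/4)^((2:ℝ)/7-1) * (7/4) * v ((7*y/4)^((4:ℝ)/7))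
          + (7*y/4)^((2:ℝ)/7) * (deriv v ((7*y/4)^((4:ℝ)/7)) * ((4:ℝ)/7 * (7*y/4)^((4:ℝ)/7-1) * (7/4))))
        = D y := by
      have e1 : (7*y/4:ℝ)^((2:ℝ)/7) * (7*y/4:ℝ)^(-(3:ℝ)/7) = (7*y/4)^(-(1:ℝ)/7) := by
        rw [← Real.rpow_add hs]; norm_num
      rw [hD]
      rw [show (2:ℝ)/7-1 = -(5:ℝ)/7 by norm_num, show (4:ℝ)/7-1 = -(3:ℝ)/7 by norm_num]
      dsimp only
      linear_combination (deriv v ((7*y/4:ℝ)^((4:ℝ)/7))) * e1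
    rw [← hval]
    exact hU.congr_of_eventuallyEq heq
  intro x hx
  have hs : (0:ℝ) < 7*x/4 := by linarith
  set c : ℝ := (7*x/4) ^ ((1:ℝ)/7) with hc
  have hc0 : 0 < c := Real.rpow_pos_of_pos hs _
  have ht : (0:ℝ) < (7*x/4)^((4:ℝ)/7) := Real.rpow_pos_of_pos hs _
  -- second derivative
  have hw : HasDerivAt (fun z : ℝ => (7*z/4)^((4:ℝ)/7))
      ((4:ℝ)/7 * (7*x/4)^((4:ℝ)/7-1) * (7/4)) x := hdp _ hx
  have h5 : HasDerivAt (fun z : ℝ => (7*z/4)^(-(5:ℝ)/7))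
      (-(5:ℝ)/7 * (7*x/4)^(-(5:ℝ)/7-1) * (7/4)) x := hdp _ hx
  have h1' : HasDerivAt (fun z : ℝ => (7*z/4)^(-(1:ℝ)/7))
      (-(1:ℝ)/7 * (7*x/4)^(-(1:ℝ)/7-1) * (7/4)) x := hdp _ hx
  have h2 : HasDerivAt (fun z : ℝ => v ((7*z/4)^((4:ℝ)/7)))
      (deriv v ((7*x/4)^((4:ℝ)/7)) * ((4:ℝ)/7 * (7*x/4)^((4:ℝ)/7-1) * (7/4))) x :=
    ((hv1 _ ht).hasDerivAt).comp x hw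
  have h3 : HasDerivAt (fun z : ℝ => deriv v ((7*z/4)^((4:ℝ)/7)))
      (deriv (deriv v) ((7*x/4)^((4:ℝ)/7)) * ((4:ℝ)/7 * (7*x/4)^((4:ℝ)/7-1) * (7/4))) x :=
    by have := ((hv2 _ ht).hasDerivAt).comp x hw; exact this
  have hDD : HasDerivAt D
      ((1/2 * (-(5:ℝ)/7 * (7*x/4)^(-(5:ℝ)/7-1) * (7/4))) * v ((7*x/4)^((4:ℝ)/7))
        + (1/2 * (7*x/4)^(-(5:ℝ)/7)) * (deriv v ((7*x/4)^((4:ℝ)/7)) * ((4:ℝ)/7 * (7*x/4)^((4:ℝ)/7-1) * (7/4)))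
        + ((-(1:ℝ)/7 * (7*x/4)^(-(1:ℝ)/7-1) * (7/4)) * deriv v ((7*x/4)^((4:ℝ)/7))
          + (7*x/4)^(-(1:ℝ)/7) * (deriv (deriv v) ((7*x/4)^((4:ℝ)/7)) * ((4:ℝ)/7 * (7*x/4)^((4:ℝ)/7-1) * (7/4))))) x := by
    rw [hD]
    exact ((h5.const_mul (1/2:ℝ)).mul h2).add (h1'.mul h3)
  have heq2 : deriv u =ᶠ[nhds x] D :=
    (eventually_gt_nhds hx).mono fun z hz => (hDu z hz).deriv
  have hdd2 := (hDD.congr_of_eventuallyEq heq2).deriv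
  rw [hdd2, huz x hx]
  have hderiv1 : deriv u x = D x := (hDu x hx).deriv
  rw [hderiv1, hD]
  dsimp only
  -- conversions to powers of c
  have c2 : (7*x/4:ℝ)^((2:ℝ)/7) = c^2 := by rw [hc, ← pow17 hs 2]; norm_num
  have c4 : (7*x/4:ℝ)^((4:ℝ)/7) = c^4 := by rw [hc, ← pow17 hs 4]; norm_num
  have m5 : (7*x/4:ℝ)^(-(5:ℝ)/7) = (c^5)⁻¹ := by rw [hc, ← pow17n hs 5]; norm_num
  have m1 : (7*x/4:ℝ)^(-(1:ℝ)/7) = c⁻¹ := by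
    rw [hc, show (c:ℝ)⁻¹ = (((7*x/4:ℝ) ^ ((1:ℝ)/7))^(1:ℕ))⁻¹ by rw [hc, pow_one], ← pow17n hs 1]
    norm_num
  have m12 : (7*x/4:ℝ)^(-(5:ℝ)/7-1) = (c^12)⁻¹ := by
    rw [show -(5:ℝ)/7-1 = -(12:ℝ)/7 by norm_num, hc, ← pow17n hs 12]; norm_num
  have m3 : (7*x/4:ℝ)^((4:ℝ)/7-1) = (c^3)⁻¹ := by
    rw [show (4:ℝ)/7-1 = -(3:ℝ)/7 by norm_num, hc, ← pow17n hs 3]; norm_num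
  have m8 : (7*x/4:ℝ)^(-(1:ℝ)/7-1) = (c^8)⁻¹ := by
    rw [show -(1:ℝ)/7-1 = -(8:ℝ)/7 by norm_num, hc, ← pow17n hs 8]; norm_num
  rw [c2, c4, m5, m1, m12, m3, m8]
  have hc4 : (0:ℝ) < c^4 := by positivity
  have hV : v (c^4) ≠ 0 := hvne _ hc4
  have hode : deriv (deriv v) (c^4) = c^4/2 - 1/(v (c^4))^2/2 := by
    linarith [hveq (c^4) hc4]
  rw [hode]
  have hc7 : c^7 = 7*x/4 := by
    rw [hc, ← pow17 hs 7, show ((7:ℕ):ℝ)/7 = (1:ℝ) by norm_num, Real.rpow_one]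
  have hx4 : x = 4*c^7/7 := by linarith
  rw [show 1 + (c^2 * v (c^4) - 1) = c^2 * v (c^4) by ring, hx4]
  field_simp
  ring
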